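/- Let J : Z_p → R_{≥0} be integrable and radial, supported in Z_p, and let l be a positive integer. For K ∈ G_l, the convolution J(|·|_p) * Ω(p^l|·-K|_p), restricted to Z_p, equals Σ_{I ∈ G_l, I ≠ K} p^{-l} J(|I-K|_p) Ω(p^l|x-I|_p) + Aver_l(J) Ω(p^l|x-K|_p), where Aver_l(J) = ∫_{p^l Z_p} J(|z|_p) dz. -/

import Mathlib

open MeasureTheory ENNReal

instance {p l : ℕ} [hp : Fact p.Prime] : NeZero (p ^ l) :=
  ⟨pow_ne_zero l hp.out.ne_zero⟩

lemma mem_ball_iff' (p l : ℕ) [Fact p.Prime] (z : ℤ_[p]) (I : ZMod (p ^ l)) :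
    ‖(z : ℚ_[p]) - ((I.val : ℤ_[p]) : ℚ_[p])‖ ≤ (p : ℝ) ^ (-(l : ℤ)) ↔
      PadicInt.toZModPow l z = I := by
  have h1 : (z : ℚ_[p]) - ((I.val : ℤ_[p]) : ℚ_[p]) = ((z - (I.val : ℤ_[p]) : ℤ_[p]) : ℚ_[p]) := by
    push_cast; ring
  rw [h1, PadicInt.padic_norm_e_of_padicInt]
  rw [show (-(l:ℤ)) = (-(l:ℕ) : ℤ) from rfl]
  rw [PadicInt.norm_le_pow_iff_mem_span_pow, ← PadicInt.ker_toZModPow, RingHom.mem_ker,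
    map_sub, sub_eq_zero, map_natCast, ZMod.natCast_zmod_val]

lemma ball_meas (p l : ℕ) [Fact p.Prime] [MeasurableSpace ℚ_[p]] [BorelSpace ℚ_[p]]
    (c : ℚ_[p]) : MeasurableSet {w : ℚ_[p] | ‖w - c‖ ≤ (p : ℝ) ^ (-(l : ℤ))} := by
  have : IsClosed {w : ℚ_[p] | ‖w - c‖ ≤ (p : ℝ) ^ (-(l : ℤ))} :=
    isClosed_le (by continuity) continuous_const
  exact this.measurableSet

lemma ball_trans (p l : ℕ) [Fact p.Prime] (c : ℚ_[p]) :
    {w : ℚ_[p] | ‖w - c‖ ≤ (p : ℝ) ^ (-(l : ℤ))}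
      = (fun w => (-c) + w) ⁻¹' {w : ℚ_[p] | ‖w‖ ≤ (p : ℝ) ^ (-(l : ℤ))} := by
  ext w; simp [Set.mem_preimage, neg_add_eq_sub]

lemma ball_measure (p l : ℕ) [Fact p.Prime]
    [MeasurableSpace ℚ_[p]] [BorelSpace ℚ_[p]]
    (μ : Measure ℚ_[p]) [μ.IsAddLeftInvariant]
    (hμ : μ {x : ℚ_[p] | ‖x‖ ≤ 1} = 1) (c : ℚ_[p]) :
    μ {w : ℚ_[p] | ‖w - c‖ ≤ (p : ℝ) ^ (-(l : ℤ))} = ((p : ℝ≥0∞) ^ l)⁻¹ := by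
  set B0 : Set ℚ_[p] := {w : ℚ_[p] | ‖w‖ ≤ (p : ℝ) ^ (-(l : ℤ))} with hB0
  have hmeas0 : MeasurableSet B0 := by
    have h := ball_meas p l (0 : ℚ_[p])
    simp only [sub_zero] at h; exact h
  have htrans : ∀ c' : ℚ_[p], μ {w : ℚ_[p] | ‖w - c'‖ ≤ (p : ℝ) ^ (-(l : ℤ))} = μ B0 := by
    intro c'
    rw [ball_trans, measure_preimage_add]
  rw [htrans]
  -- partition of Z_p
  have hcover : {x : ℚ_[p] | ‖x‖ ≤ 1} =
      ⋃ I : ZMod (p ^ l), {w : ℚ_[p] | ‖w - ((I.val : ℤ_[p]) : ℚ_[p])‖ ≤ (p : ℝ) ^ (-(l : ℤ))} := by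
    ext w
    simp only [Set.mem_setOf_eq, Set.mem_iUnion]
    constructor
    · intro hw
      refine ⟨PadicInt.toZModPow l ⟨w, hw⟩, ?_⟩
      exact (mem_ball_iff' p l ⟨w, hw⟩ _).mpr rfl
    · rintro ⟨I, hI⟩
      have h1 : ‖((I.val : ℤ_[p]) : ℚ_[p])‖ ≤ 1 := by rw [PadicInt.padic_norm_e_of_padicInt]; exact PadicInt.norm_le_one _
      have h2 : (p : ℝ) ^ (-(l : ℤ)) ≤ 1 := by
        apply zpow_le_one_of_nonpos₀
        · exact_mod_cast (Fact.out : p.Prime).one_le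
        · omega
      calc ‖w‖ = ‖(w - ((I.val : ℤ_[p]) : ℚ_[p])) + ((I.val : ℤ_[p]) : ℚ_[p])‖ := by ring_nf
        _ ≤ max ‖w - ((I.val : ℤ_[p]) : ℚ_[p])‖ ‖((I.val : ℤ_[p]) : ℚ_[p])‖ := Padic.nonarchimedean _ _
        _ ≤ 1 := max_le (le_trans hI h2) h1
  have hdisj : Pairwise (Function.onFun Disjoint
      (fun I : ZMod (p ^ l) => {w : ℚ_[p] | ‖w - ((I.val : ℤ_[p]) : ℚ_[p])‖ ≤ (p : ℝ) ^ (-(l : ℤ))})) := by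
    intro I I' hne
    rw [Function.onFun, Set.disjoint_left]
    intro w hwI hwI'
    apply hne
    have key : ‖((I.val : ℤ_[p]) : ℚ_[p]) - ((I'.val : ℤ_[p]) : ℚ_[p])‖ ≤ (p : ℝ) ^ (-(l : ℤ)) := by
      calc ‖((I.val : ℤ_[p]) : ℚ_[p]) - ((I'.val : ℤ_[p]) : ℚ_[p])‖
          = ‖(-(w - ((I.val : ℤ_[p]) : ℚ_[p]))) + (w - ((I'.val : ℤ_[p]) : ℚ_[p]))‖ := by ring_nf
        _ ≤ max ‖-(w - ((I.val : ℤ_[p]) : ℚ_[p]))‖ ‖w - ((I'.val : ℤ_[p]) : ℚ_[p])‖ :=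
            Padic.nonarchimedean _ _
        _ ≤ (p : ℝ) ^ (-(l : ℤ)) := max_le (by rwa [norm_neg]) hwI'
    have h1 := (mem_ball_iff' p l (I.val : ℤ_[p]) I').mp key
    have h2 : PadicInt.toZModPow l ((I.val : ℕ) : ℤ_[p]) = I := by
      simp [map_natCast, ZMod.natCast_zmod_val]
    rw [h2] at h1; exact h1
  have hsum : μ {x : ℚ_[p] | ‖x‖ ≤ 1} = ∑ I : ZMod (p ^ l), μ B0 := by
    rw [hcover, measure_iUnion hdisj (fun I => ball_meas p l _)]
    rw [tsum_fintype]
    exact Finset.sum_congr rfl fun I _ => htrans _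
  rw [hμ, Finset.sum_const, Finset.card_univ, ZMod.card, nsmul_eq_mul] at hsum
  have hpl : ((p : ℝ≥0∞) ^ l) ≠ 0 := by
    simp [(Fact.out : p.Prime).ne_zero]
  have hplt : ((p : ℝ≥0∞) ^ l) ≠ ⊤ := by
    simp [ENNReal.pow_ne_top, ENNReal.natCast_ne_top]
  calc μ B0 = ((p:ℝ≥0∞)^l)⁻¹ * ((p:ℝ≥0∞)^l * μ B0) := by
        rw [← mul_assoc, ENNReal.inv_mul_cancel hpl hplt, one_mul]
    _ = ((p:ℝ≥0∞)^l)⁻¹ := by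
        rw [show ((p:ℝ≥0∞)^l : ℝ≥0∞) = ((p^l : ℕ) : ℝ≥0∞) by push_cast; ring, ← hsum, mul_one]

/-- For radial integrable `J` supported in `ℤ_p`, locally constant off `0` at scale `p^{-l}`,
and `K ∈ G_l`, the convolution `J(|·|_p) * Ω(p^l|·-K|_p)` restricted to `ℤ_p` equals
`Σ_{I ≠ K} p^{-l} J(|I-K|_p) Ω(p^l|x-I|_p) + Aver_l(J) Ω(p^l|x-K|_p)`. -/
theorem stmt6 (p l : ℕ) [Fact p.Prime] (hl : 0 < l)
    [MeasurableSpace ℚ_[p]] [BorelSpace ℚ_[p]]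
    (μ : Measure ℚ_[p]) [μ.IsAddLeftInvariant]
    (hμ : μ {x : ℚ_[p] | ‖x‖ ≤ 1} = 1)
    (Jr : ℝ → ℝ) (hJnn : ∀ x : ℤ_[p], 0 ≤ Jr ‖x‖)
    (hJint : Integrable
      (fun z : ℚ_[p] => Set.indicator {w : ℚ_[p] | ‖w‖ ≤ 1} (fun w => Jr ‖w‖) z) μ)
    (hloc : ∀ I : ZMod (p ^ l), I ≠ 0 → ∀ x : ℚ_[p],
      ‖x - ((I.val : ℤ_[p]) : ℚ_[p])‖ ≤ (p : ℝ) ^ (-(l : ℤ)) →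
        Jr ‖x‖ = Jr ‖((I.val : ℤ_[p]) : ℚ_[p])‖)
    (K : ZMod (p ^ l)) (x : ℤ_[p]) :
    ∫ y : ℚ_[p],
        Set.indicator {w : ℚ_[p] | ‖w‖ ≤ 1} (fun w => Jr ‖w‖) ((x : ℚ_[p]) - y) *
        Set.indicator {w : ℚ_[p] | ‖w - ((K.val : ℤ_[p]) : ℚ_[p])‖ ≤ (p : ℝ) ^ (-(l : ℤ))}
          (fun _ => (1 : ℝ)) y ∂μ
      = (∑ I ∈ Finset.univ.filter (fun I : ZMod (p ^ l) => I ≠ K),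
          (p : ℝ) ^ (-(l : ℤ)) * Jr ‖(((I - K).val : ℤ_[p]) : ℚ_[p])‖ *
            Set.indicator {w : ℚ_[p] | ‖w - ((I.val : ℤ_[p]) : ℚ_[p])‖ ≤ (p : ℝ) ^ (-(l : ℤ))}
              (fun _ => (1 : ℝ)) (x : ℚ_[p]))
        + (∫ z in {w : ℚ_[p] | ‖w‖ ≤ (p : ℝ) ^ (-(l : ℤ))}, Jr ‖z‖ ∂μ) *
            Set.indicator {w : ℚ_[p] | ‖w - ((K.val : ℤ_[p]) : ℚ_[p])‖ ≤ (p : ℝ) ^ (-(l : ℤ))}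
              (fun _ => (1 : ℝ)) (x : ℚ_[p]) := by
  classical
  set r : ℝ := (p : ℝ) ^ (-(l : ℤ)) with hr
  set cK : ℚ_[p] := ((K.val : ℤ_[p]) : ℚ_[p]) with hcK
  set BK : Set ℚ_[p] := {w : ℚ_[p] | ‖w - cK‖ ≤ r} with hBK
  have hmeasBK : MeasurableSet BK := ball_meas p l cK
  have hr1 : r ≤ 1 := by
    apply zpow_le_one_of_nonpos₀
    · exact_mod_cast (Fact.out : p.Prime).one_le
    · omega
  have hLHS : (∫ y, Set.indicator {w : ℚ_[p] | ‖w‖ ≤ 1} (fun w => Jr ‖w‖) ((x : ℚ_[p]) - y) *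
        Set.indicator BK (fun _ => (1 : ℝ)) y ∂μ)
      = ∫ y in BK, Set.indicator {w : ℚ_[p] | ‖w‖ ≤ 1} (fun w => Jr ‖w‖) ((x : ℚ_[p]) - y) ∂μ := by
    rw [← integral_indicator hmeasBK]
    congr 1; funext y
    by_cases hy : y ∈ BK
    · simp [Set.indicator_of_mem hy]
    · simp [Set.indicator_of_notMem hy]
  rw [hLHS]
  set I0 := PadicInt.toZModPow l x with hI0
  have hx0 : ‖(x : ℚ_[p]) - ((I0.val : ℤ_[p]) : ℚ_[p])‖ ≤ r := (mem_ball_iff' p l x I0).mpr rfl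
  by_cases hK : I0 = K
  · -- x ∈ BK
    have hxBK : (x : ℚ_[p]) ∈ BK := by
      rw [hBK]; exact Set.mem_setOf_eq ▸ ((mem_ball_iff' p l x K).mpr hK)
    have hsum0 : (∑ I ∈ Finset.univ.filter (fun I : ZMod (p ^ l) => I ≠ K),
          r * Jr ‖(((I - K).val : ℤ_[p]) : ℚ_[p])‖ *
            Set.indicator {w : ℚ_[p] | ‖w - ((I.val : ℤ_[p]) : ℚ_[p])‖ ≤ r}
              (fun _ => (1 : ℝ)) (x : ℚ_[p])) = 0 := by
      apply Finset.sum_eq_zero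
      intro I hI
      have hIne : I ≠ K := (Finset.mem_filter.mp hI).2
      have hnm : (x : ℚ_[p]) ∉ {w : ℚ_[p] | ‖w - ((I.val : ℤ_[p]) : ℚ_[p])‖ ≤ r} := by
        intro h
        exact hIne (((mem_ball_iff' p l x I).mp h) ▸ hK)
      rw [Set.indicator_of_notMem hnm, mul_zero]
    rw [hsum0, zero_add, Set.indicator_of_mem hxBK, mul_one]
    have hcongr : Set.EqOn
        (fun y => Set.indicator {w : ℚ_[p] | ‖w‖ ≤ 1} (fun w => Jr ‖w‖) ((x : ℚ_[p]) - y))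
        (fun y => Jr ‖y - (x : ℚ_[p])‖) BK := by
      intro y hy
      have hxy : ‖(x : ℚ_[p]) - y‖ ≤ r := by
        calc ‖(x : ℚ_[p]) - y‖ = ‖((x : ℚ_[p]) - cK) + -(y - cK)‖ := by ring_nf
          _ ≤ max ‖(x : ℚ_[p]) - cK‖ ‖-(y - cK)‖ := Padic.nonarchimedean _ _
          _ ≤ r := max_le hxBK (by rw [norm_neg]; exact hy)
      have hmem : (x : ℚ_[p]) - y ∈ {w : ℚ_[p] | ‖w‖ ≤ 1} := le_trans hxy hr1
      simp only [Set.indicator_of_mem hmem, norm_sub_rev]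
    rw [setIntegral_congr_fun hmeasBK hcongr]
    have hball : BK = (fun w => (-(x : ℚ_[p])) + w) ⁻¹' {w : ℚ_[p] | ‖w‖ ≤ r} := by
      ext w
      simp only [hBK, Set.mem_preimage, Set.mem_setOf_eq, neg_add_eq_sub]
      constructor
      · intro h
        calc ‖w - (x : ℚ_[p])‖ = ‖(w - cK) + -((x : ℚ_[p]) - cK)‖ := by ring_nf
          _ ≤ max ‖w - cK‖ ‖-((x : ℚ_[p]) - cK)‖ := Padic.nonarchimedean _ _
          _ ≤ r := max_le h (by rw [norm_neg]; exact hxBK)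
      · intro h
        calc ‖w - cK‖ = ‖(w - (x : ℚ_[p])) + ((x : ℚ_[p]) - cK)‖ := by ring_nf
          _ ≤ max ‖w - (x : ℚ_[p])‖ ‖(x : ℚ_[p]) - cK‖ := Padic.nonarchimedean _ _
          _ ≤ r := max_le h hxBK
    rw [hball]
    have hcv := (measurePreserving_add_left μ (-(x : ℚ_[p]))).setIntegral_preimage_emb
      (MeasurableEquiv.addLeft (-(x : ℚ_[p]))).measurableEmbedding
      (fun z => Jr ‖z‖) {w : ℚ_[p] | ‖w‖ ≤ r}
    simp only [neg_add_eq_sub] at hcv ⊢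
    exact hcv
  · -- x ∉ BK
    have hxnBK : (x : ℚ_[p]) ∉ BK := fun h => hK ((mem_ball_iff' p l x K).mp h)
    set c' : ℚ_[p] := (((I0 - K).val : ℤ_[p]) : ℚ_[p]) with hc'
    have hc'le : ‖c'‖ ≤ 1 := by
      rw [hc', PadicInt.padic_norm_e_of_padicInt]; exact PadicInt.norm_le_one _
    have hmid : ‖(((I0.val : ℤ_[p]) : ℚ_[p]) - cK) - c'‖ ≤ r := by
      have key := (mem_ball_iff' p l ((I0.val : ℤ_[p]) - (K.val : ℤ_[p])) (I0 - K)).mpr (by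
        simp [map_sub, map_natCast, ZMod.natCast_zmod_val])
      have : (((I0.val : ℤ_[p]) - (K.val : ℤ_[p]) : ℤ_[p]) : ℚ_[p])
          = ((I0.val : ℤ_[p]) : ℚ_[p]) - cK := by push_cast [hcK]; ring
      rwa [this] at key
    have hconst : Set.EqOn
        (fun y => Set.indicator {w : ℚ_[p] | ‖w‖ ≤ 1} (fun w => Jr ‖w‖) ((x : ℚ_[p]) - y))
        (fun _ => Jr ‖c'‖) BK := by
      intro y hy
      have hkey : ‖((x : ℚ_[p]) - y) - c'‖ ≤ r := by
        calc ‖((x : ℚ_[p]) - y) - c'‖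
            = ‖(((x : ℚ_[p]) - ((I0.val : ℤ_[p]) : ℚ_[p])) + -(y - cK))
                + ((((I0.val : ℤ_[p]) : ℚ_[p]) - cK) - c')‖ := by ring_nf
          _ ≤ max ‖((x : ℚ_[p]) - ((I0.val : ℤ_[p]) : ℚ_[p])) + -(y - cK)‖
                ‖(((I0.val : ℤ_[p]) : ℚ_[p]) - cK) - c'‖ := Padic.nonarchimedean _ _
          _ ≤ r := by
              apply max_le _ hmid
              calc ‖((x : ℚ_[p]) - ((I0.val : ℤ_[p]) : ℚ_[p])) + -(y - cK)‖
                  ≤ max ‖(x : ℚ_[p]) - ((I0.val : ℤ_[p]) : ℚ_[p])‖ ‖-(y - cK)‖ :=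
                    Padic.nonarchimedean _ _
                _ ≤ r := max_le hx0 (by rw [norm_neg]; exact hy)
      have hmem : (x : ℚ_[p]) - y ∈ {w : ℚ_[p] | ‖w‖ ≤ 1} := by
        have : ‖(x : ℚ_[p]) - y‖ ≤ max ‖((x : ℚ_[p]) - y) - c'‖ ‖c'‖ := by
          calc ‖(x : ℚ_[p]) - y‖ = ‖(((x : ℚ_[p]) - y) - c') + c'‖ := by ring_nf
            _ ≤ _ := Padic.nonarchimedean _ _
        exact le_trans this (max_le (le_trans hkey hr1) hc'le)
      have := hloc (I0 - K) (sub_ne_zero.mpr hK) ((x : ℚ_[p]) - y) hkey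
      simp only [Set.indicator_of_mem hmem]
      exact this
    rw [setIntegral_congr_fun hmeasBK hconst, setIntegral_const]
    have hmeasval : μ BK = ((p : ℝ≥0∞) ^ l)⁻¹ := ball_measure p l μ hμ cK
    have htoReal : (μ BK).toReal = r := by
      rw [hmeasval, hr, zpow_neg, zpow_natCast]
      simp [ENNReal.toReal_inv, ENNReal.toReal_pow]
    rw [measureReal_def, htoReal, smul_eq_mul]
    -- RHS
    rw [Set.indicator_of_notMem hxnBK, mul_zero, add_zero]
    rw [Finset.sum_eq_single_of_mem I0 (by simp [Finset.mem_filter, hK])]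
    · have hxI0 : (x : ℚ_[p]) ∈ {w : ℚ_[p] | ‖w - ((I0.val : ℤ_[p]) : ℚ_[p])‖ ≤ r} := hx0
      rw [Set.indicator_of_mem hxI0, mul_one, mul_comm]
    · intro I hI hIne
      have hnm : (x : ℚ_[p]) ∉ {w : ℚ_[p] | ‖w - ((I.val : ℤ_[p]) : ℚ_[p])‖ ≤ r} := by
        intro h
        exact hIne (((mem_ball_iff' p l x I).mp h).symm ▸ rfl)
      rw [Set.indicator_of_notMem hnm, mul_zero]
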